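/- There exists an absolute constant c > 0 such that for every n ∈ ℕ and every trigonometric polynomial t_{n−1} of degree at most n−1: max_{t ∈ [−π,π]} |(V_{2n}(t) − V_n(t)) − t_{n−1}(t)| ≥ c·n. -/

import Mathlib

open Real Finset MeasureTheory

/-- The Dirichlet kernel `D_k(t) = 1/2 + Σ_{ν=1}^{k} cos(νt)`. -/
noncomputable def dirichletK (k : ℕ) (t : ℝ) : ℝ :=
  1 / 2 + ∑ ν ∈ Finset.Icc 1 k, Real.cos ((ν : ℝ) * t)

/-- The de la Vallée Poussin kernel `V_m(t) = (1/m) Σ_{k=m}^{2m−1} D_k(t)`. -/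
noncomputable def vallee (m : ℕ) (t : ℝ) : ℝ :=
  (1 / (m : ℝ)) * ∑ k ∈ Finset.Icc m (2 * m - 1), dirichletK k t

/-- A trigonometric polynomial of degree at most `m`:
`T(x) = a₀/2 + Σ_{k=1}^{m} (a_k cos kx + b_k sin kx)`. -/
def IsTrigPoly (m : ℕ) (T : ℝ → ℝ) : Prop :=
  ∃ a b : ℕ → ℝ, ∀ x : ℝ,
    T x = a 0 / 2 + ∑ k ∈ Finset.Icc 1 m, (a k * Real.cos ((k : ℝ) * x) + b k * Real.sin ((k : ℝ) * x))

open intervalIntegral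

lemma int_sin_real (c : ℝ) : ∫ t in (-π)..π, Real.sin (c * t) = 0 := by
  rcases eq_or_ne c 0 with h | h
  · simp [h]
  · rw [intervalIntegral.integral_comp_mul_left (fun x => Real.sin x) h]
    simp [integral_sin, Real.cos_neg]

lemma int_cos_real (c : ℝ) (h0 : c ≠ 0) (h : Real.sin (c * π) = 0) :
    ∫ t in (-π)..π, Real.cos (c * t) = 0 := by
  rw [intervalIntegral.integral_comp_mul_left (fun x => Real.cos x) h0]
  simp [integral_cos, Real.sin_neg, h]

lemma int_cos_nat (ν : ℕ) (hν : 1 ≤ ν) : ∫ t in (-π)..π, Real.cos ((ν : ℝ) * t) = 0 := by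
  exact int_cos_real ν (Nat.cast_ne_zero.mpr (by omega)) (Real.sin_nat_mul_pi ν)

lemma ic_sin (c : ℝ) : IntervalIntegrable (fun t => Real.sin (c*t)) volume (-π) π :=
  (Real.continuous_sin.comp (continuous_const.mul continuous_id)).intervalIntegrable _ _

lemma ic_cos (c : ℝ) : IntervalIntegrable (fun t => Real.cos (c*t)) volume (-π) π :=
  (Real.continuous_cos.comp (continuous_const.mul continuous_id)).intervalIntegrable _ _

lemma int_cos_sin (a b : ℕ) : ∫ t in (-π)..π, Real.cos (a*t) * Real.sin (b*t) = 0 := by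
  have h : ∀ t : ℝ, Real.cos (a*t) * Real.sin (b*t)
      = (Real.sin (((a:ℝ)+b)*t) + Real.sin (((b:ℝ)-(a:ℝ))*t))/2 := by
    intro t; rw [add_mul, sub_mul, Real.sin_add, Real.sin_sub]; ring
  simp_rw [h]
  rw [intervalIntegral.integral_div, intervalIntegral.integral_add (ic_sin _) (ic_sin _),
    int_sin_real, int_sin_real]
  norm_num

lemma int_cos_int (z : ℤ) (hz : z ≠ 0) : ∫ t in (-π)..π, Real.cos ((z:ℝ) * t) = 0 :=
  int_cos_real z (Int.cast_ne_zero.mpr hz) (Real.sin_int_mul_pi z)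

lemma int_cos_cos_ne (a b : ℕ) (hab : a ≠ b) :
    ∫ t in (-π)..π, Real.cos (a*t) * Real.cos (b*t) = 0 := by
  have h : ∀ t : ℝ, Real.cos (a*t) * Real.cos (b*t)
      = (Real.cos ((((a:ℕ)+b : ℕ):ℝ)*t) + Real.cos ((((a:ℤ)-b : ℤ):ℝ)*t))/2 := by
    intro t; push_cast; rw [add_mul, sub_mul, Real.cos_add, Real.cos_sub]; ring
  simp_rw [h]
  rw [intervalIntegral.integral_div, intervalIntegral.integral_add (ic_cos _) (ic_cos _),
    int_cos_nat (a+b) (by omega), int_cos_int ((a:ℤ)-b) (by omega)]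
  norm_num

lemma int_cos_cos_self (a : ℕ) (ha : 1 ≤ a) :
    ∫ t in (-π)..π, Real.cos (a*t) * Real.cos (a*t) = π := by
  have h : ∀ t : ℝ, Real.cos (a*t) * Real.cos (a*t)
      = 1/2 + Real.cos ((((2*a : ℕ)):ℝ)*t)/2 := by
    intro t
    have := Real.cos_sq ((a:ℝ)*t)
    push_cast
    rw [mul_assoc]
    nlinarith [this]
  simp_rw [h]
  rw [intervalIntegral.integral_add (Continuous.intervalIntegrable (by fun_prop) _ _)
    ((ic_cos _).div_const 2)]
  have h2 : ∫ x in (-π)..π, Real.cos ((((2*a:ℕ)):ℝ)*x)/2 = 0 := by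
    rw [intervalIntegral.integral_div, int_cos_nat (2*a) (by omega)]; simp
  rw [h2]
  simp; ring

lemma int_sin_sin (a b : ℕ) :
    ∫ t in (-π)..π, Real.sin (a*t) * Real.sin (b*t)
      = if a = b then (if a = 0 then 0 else π) else 0 := by
  rcases eq_or_ne a b with rfl | hab
  · rcases Nat.eq_zero_or_pos a with rfl | ha
    · simp
    · have h : ∀ t : ℝ, Real.sin (a*t) * Real.sin (a*t)
          = 1/2 - Real.cos (((2*a:ℕ):ℝ)*t)/2 := by
        intro t
        have := Real.cos_sq ((a:ℝ)*t)
        have h2 := Real.sin_sq_add_cos_sq ((a:ℝ)*t)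
        push_cast
        rw [mul_assoc]
        nlinarith
      simp_rw [h]
      rw [intervalIntegral.integral_sub (Continuous.intervalIntegrable (by fun_prop) _ _)
        ((ic_cos _).div_const 2)]
      have h2 : ∫ x in (-π)..π, Real.cos ((((2*a:ℕ)):ℝ)*x)/2 = 0 := by
        rw [intervalIntegral.integral_div, int_cos_nat (2*a) (by omega)]; simp
      rw [h2]
      simp [if_neg (by omega : ¬ a = 0)]; ring
  · have h : ∀ t : ℝ, Real.sin (a*t) * Real.sin (b*t)
        = (Real.cos ((((a:ℤ)-b : ℤ):ℝ)*t) - Real.cos ((((a:ℕ)+b : ℕ):ℝ)*t))/2 := by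
      intro t; push_cast; rw [add_mul, sub_mul, Real.cos_add, Real.cos_sub]; ring
    simp_rw [h]
    rw [intervalIntegral.integral_div, intervalIntegral.integral_sub (ic_cos _) (ic_cos _),
      int_cos_nat (a+b) (by omega), int_cos_int ((a:ℤ)-b) (by omega)]
    simp [hab]

lemma int_cos_cos (a b : ℕ) :
    ∫ t in (-π)..π, Real.cos (a*t) * Real.cos (b*t)
      = if a = b then (if a = 0 then 2*π else π) else 0 := by
  rcases eq_or_ne a b with rfl | hab
  · rcases Nat.eq_zero_or_pos a with rfl | ha
    · simp; ring
    · rw [int_cos_cos_self a ha]; simp [if_neg (by omega : ¬ a = 0)]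
  · rw [int_cos_cos_ne a b hab]; simp [hab]

lemma int_term_term (k l : ℕ) (hk : 1 ≤ k) (hl : 1 ≤ l) (A B C D : ℝ) :
    ∫ t in (-π)..π,
      (A * Real.cos (k*t) + B * Real.sin (k*t)) * (C * Real.cos (l*t) + D * Real.sin (l*t))
      = if k = l then π * (A*C + B*D) else 0 := by
  have h : ∀ t : ℝ,
      (A * Real.cos (k*t) + B * Real.sin (k*t)) * (C * Real.cos (l*t) + D * Real.sin (l*t))
      = (A*C) * (Real.cos (k*t) * Real.cos (l*t)) + ((A*D) * (Real.cos (k*t) * Real.sin (l*t))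
        + ((B*C) * (Real.cos (l*t) * Real.sin (k*t))
          + (B*D) * (Real.sin (k*t) * Real.sin (l*t)))) := by
    intro t; ring
  simp_rw [h]
  rw [intervalIntegral.integral_add (Continuous.intervalIntegrable (by fun_prop) _ _)
        (Continuous.intervalIntegrable (by fun_prop) _ _),
      intervalIntegral.integral_add (Continuous.intervalIntegrable (by fun_prop) _ _)
        (Continuous.intervalIntegrable (by fun_prop) _ _),
      intervalIntegral.integral_add (Continuous.intervalIntegrable (by fun_prop) _ _)
        (Continuous.intervalIntegrable (by fun_prop) _ _),
      intervalIntegral.integral_const_mul, intervalIntegral.integral_const_mul,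
      intervalIntegral.integral_const_mul, intervalIntegral.integral_const_mul,
      int_cos_cos, int_cos_sin, int_cos_sin, int_sin_sin]
  rcases eq_or_ne k l with rfl | hkl
  · simp [if_neg (by omega : ¬ k = 0)]; ring
  · simp [hkl, Ne.symm hkl]

noncomputable def tpoly (p q : ℕ → ℝ) (N : ℕ) (t : ℝ) : ℝ :=
  p 0 / 2 + ∑ k ∈ Finset.Icc 1 N, (p k * Real.cos ((k:ℝ)*t) + q k * Real.sin ((k:ℝ)*t))

lemma cont_S (p q : ℕ → ℝ) (N : ℕ) :
    Continuous (fun t : ℝ => ∑ k ∈ Finset.Icc 1 N,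
      (p k * Real.cos ((k:ℝ)*t) + q k * Real.sin ((k:ℝ)*t))) :=
  continuous_finset_sum _ (fun k _ => by fun_prop)

lemma cont_tpoly (p q : ℕ → ℝ) (N : ℕ) : Continuous (tpoly p q N) := by
  unfold tpoly; exact continuous_const.add (cont_S p q N)

lemma int_term_zero (l : ℕ) (hl : 1 ≤ l) (C D : ℝ) :
    ∫ t in (-π)..π, (C * Real.cos ((l:ℝ)*t) + D * Real.sin ((l:ℝ)*t)) = 0 := by
  rw [intervalIntegral.integral_add (Continuous.intervalIntegrable (by fun_prop) _ _)
      (Continuous.intervalIntegrable (by fun_prop) _ _),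
    intervalIntegral.integral_const_mul, intervalIntegral.integral_const_mul,
    int_cos_nat l hl, int_sin_real]
  ring

lemma tpoly_orth (N : ℕ) (p q u v : ℕ → ℝ) :
    ∫ t in (-π)..π, tpoly p q N t * tpoly u v N t
      = π * (p 0 * u 0 / 2 + ∑ k ∈ Finset.Icc 1 N, (p k * u k + q k * v k)) := by
  have hS1 : Continuous (fun t : ℝ => ∑ k ∈ Finset.Icc 1 N,
      (p k * Real.cos ((k:ℝ)*t) + q k * Real.sin ((k:ℝ)*t))) := cont_S p q N
  have hS2 : Continuous (fun t : ℝ => ∑ k ∈ Finset.Icc 1 N,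
      (u k * Real.cos ((k:ℝ)*t) + v k * Real.sin ((k:ℝ)*t))) := cont_S u v N
  have expand : ∀ t : ℝ, tpoly p q N t * tpoly u v N t
      = p 0 * u 0 / 4
        + ((p 0 / 2) * (∑ k ∈ Finset.Icc 1 N, (u k * Real.cos ((k:ℝ)*t) + v k * Real.sin ((k:ℝ)*t)))
        + ((u 0 / 2) * (∑ k ∈ Finset.Icc 1 N, (p k * Real.cos ((k:ℝ)*t) + q k * Real.sin ((k:ℝ)*t)))
        + (∑ k ∈ Finset.Icc 1 N, ∑ l ∈ Finset.Icc 1 N,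
            (p k * Real.cos ((k:ℝ)*t) + q k * Real.sin ((k:ℝ)*t))
              * (u l * Real.cos ((l:ℝ)*t) + v l * Real.sin ((l:ℝ)*t))))) := by
    intro t
    rw [← Finset.sum_mul_sum]
    unfold tpoly
    ring
  simp_rw [expand]
  have cB : Continuous (fun t : ℝ => (p 0 / 2) * (∑ k ∈ Finset.Icc 1 N,
      (u k * Real.cos ((k:ℝ)*t) + v k * Real.sin ((k:ℝ)*t)))) := continuous_const.mul hS2
  have cC : Continuous (fun t : ℝ => (u 0 / 2) * (∑ k ∈ Finset.Icc 1 N,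
      (p k * Real.cos ((k:ℝ)*t) + q k * Real.sin ((k:ℝ)*t)))) := continuous_const.mul hS1
  have cD : Continuous (fun t : ℝ => ∑ k ∈ Finset.Icc 1 N, ∑ l ∈ Finset.Icc 1 N,
      (p k * Real.cos ((k:ℝ)*t) + q k * Real.sin ((k:ℝ)*t))
        * (u l * Real.cos ((l:ℝ)*t) + v l * Real.sin ((l:ℝ)*t))) :=
    continuous_finset_sum _ (fun k _ => continuous_finset_sum _ (fun l _ => by fun_prop))
  rw [intervalIntegral.integral_add ((continuous_const (y := p 0 * u 0 / 4)).intervalIntegrable _ _)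
      (Continuous.intervalIntegrable (by exact cB.add (cC.add cD)) _ _),
    intervalIntegral.integral_add (cB.intervalIntegrable _ _)
      (Continuous.intervalIntegrable (by exact cC.add cD) _ _),
    intervalIntegral.integral_add (cC.intervalIntegrable _ _) (cD.intervalIntegrable _ _)]
  have I1 : ∫ t in (-π)..π, (p 0 * u 0 / 4 : ℝ) = π * (p 0 * u 0 / 2) := by
    simp [intervalIntegral.integral_const]; ring
  have Ienv : ∀ (w z : ℕ → ℝ) (c : ℝ), (∫ t in (-π)..π, c * (∑ k ∈ Finset.Icc 1 N,
      (w k * Real.cos ((k:ℝ)*t) + z k * Real.sin ((k:ℝ)*t)))) = 0 := by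
    intro w z c
    rw [intervalIntegral.integral_const_mul, intervalIntegral.integral_finset_sum
      (fun k _ => Continuous.intervalIntegrable (by fun_prop) _ _)]
    rw [Finset.sum_congr rfl (fun k hk => int_term_zero k (Finset.mem_Icc.mp hk).1 _ _)]
    simp
  have I4 : (∫ t in (-π)..π, ∑ k ∈ Finset.Icc 1 N, ∑ l ∈ Finset.Icc 1 N,
      (p k * Real.cos ((k:ℝ)*t) + q k * Real.sin ((k:ℝ)*t))
        * (u l * Real.cos ((l:ℝ)*t) + v l * Real.sin ((l:ℝ)*t)))
      = π * ∑ k ∈ Finset.Icc 1 N, (p k * u k + q k * v k) := by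
    rw [intervalIntegral.integral_finset_sum (fun k _ =>
        (continuous_finset_sum _ (fun l _ => by fun_prop)).intervalIntegrable _ _)]
    rw [Finset.sum_congr rfl (fun k hk => intervalIntegral.integral_finset_sum
      (fun l _ => Continuous.intervalIntegrable (by fun_prop) _ _))]
    rw [Finset.sum_congr rfl (fun k hk => Finset.sum_congr rfl (fun l hl =>
      int_term_term k l (Finset.mem_Icc.mp hk).1 (Finset.mem_Icc.mp hl).1 _ _ _ _))]
    rw [Finset.sum_congr rfl (fun k hk => Finset.sum_ite_eq (Finset.Icc 1 N) k
      (fun l => π * (p k * u l + q k * v l)))]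
    rw [Finset.sum_congr rfl (fun k hk => if_pos hk), ← Finset.mul_sum]
  rw [I1, Ienv, Ienv, I4]
  ring

lemma dirichlet_identity (k : ℕ) (t : ℝ) :
    2 * (1 - Real.cos t) * dirichletK k t = Real.cos ((k:ℝ)*t) - Real.cos (((k:ℝ)+1)*t) := by
  induction k with
  | zero => simp [dirichletK]; ring
  | succ k ih =>
    have hsum : dirichletK (k+1) t = dirichletK k t + Real.cos (((k:ℝ)+1)*t) := by
      unfold dirichletK
      rw [Finset.sum_Icc_succ_top (by omega : 1 ≤ k + 1)]
      push_cast; ring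
    rw [hsum, mul_add, ih]
    have h1 : Real.cos (((k:ℝ)+1)*t + t) + Real.cos (((k:ℝ)+1)*t - t)
        = 2 * Real.cos (((k:ℝ)+1)*t) * Real.cos t := by
      rw [Real.cos_add, Real.cos_sub]; ring
    have h2 : ((k:ℝ)+1)*t + t = ((k:ℝ)+1+1)*t := by ring
    have h3 : ((k:ℝ)+1)*t - t = (k:ℝ)*t := by ring
    rw [h2, h3] at h1
    push_cast
    linarith [h1]

lemma sum_dirichlet_nonneg (m : ℕ) (t : ℝ) : 0 ≤ ∑ k ∈ Finset.range m, dirichletK k t := by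
  rcases lt_or_eq_of_le (Real.cos_le_one t) with hlt | heq
  · have key : 2 * (1 - Real.cos t) * ∑ k ∈ Finset.range m, dirichletK k t
        = 1 - Real.cos ((m:ℝ)*t) := by
      rw [Finset.mul_sum]
      have : ∀ k ∈ Finset.range m, 2 * (1 - Real.cos t) * dirichletK k t
          = Real.cos ((k:ℝ)*t) - Real.cos (((k+1:ℕ):ℝ)*t) := by
        intro k _; rw [dirichlet_identity]; push_cast; ring_nf
      rw [Finset.sum_congr rfl this, Finset.sum_range_sub' (fun k => Real.cos ((k:ℝ)*t))]
      simp
    nlinarith [Real.cos_le_one ((m:ℝ)*t)]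
  · have ht : ∃ j : ℤ, (j:ℝ) * (2*π) = t := Real.cos_eq_one_iff t |>.mp heq
    obtain ⟨j, hj⟩ := ht
    apply Finset.sum_nonneg
    intro k _
    unfold dirichletK
    have : ∀ ν ∈ Finset.Icc 1 k, Real.cos ((ν:ℝ)*t) = 1 := by
      intro ν _
      rw [← hj]
      have : (ν:ℝ) * ((j:ℝ) * (2*π)) = ((ν * j : ℤ):ℝ) * (2*π) := by push_cast; ring
      rw [this, Real.cos_int_mul_two_pi]
    rw [Finset.sum_congr rfl this]
    simp
    positivity

lemma cont_dirichlet (k : ℕ) : Continuous (dirichletK k) := by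
  unfold dirichletK
  exact continuous_const.add (continuous_finset_sum _ (fun ν _ => by fun_prop))

lemma cont_vallee (m : ℕ) : Continuous (vallee m) := by
  unfold vallee
  exact continuous_const.mul (continuous_finset_sum _ (fun k _ => cont_dirichlet k))

lemma int_dirichlet (k : ℕ) : ∫ t in (-π)..π, dirichletK k t = π := by
  unfold dirichletK
  rw [intervalIntegral.integral_add (Continuous.intervalIntegrable (by fun_prop) _ _)
    ((continuous_finset_sum _ (fun ν _ => by fun_prop : ∀ ν ∈ Finset.Icc 1 k, Continuous
      (fun t : ℝ => Real.cos ((ν:ℝ)*t)))).intervalIntegrable _ _),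
    intervalIntegral.integral_finset_sum
      (fun ν _ => Continuous.intervalIntegrable (by fun_prop) _ _)]
  rw [Finset.sum_congr rfl (fun ν hν => int_cos_nat ν (Finset.mem_Icc.mp hν).1)]
  simp [intervalIntegral.integral_const]
  ring

lemma vallee_decomp (m : ℕ) (hm : 1 ≤ m) (t : ℝ) :
    vallee m t = (1/(m:ℝ)) * (∑ k ∈ Finset.range (2*m), dirichletK k t
      - ∑ k ∈ Finset.range m, dirichletK k t) := by
  unfold vallee
  congr 1
  have : Finset.Icc m (2*m-1) = Finset.Ico m (2*m) := by
    rw [← Finset.Ico_add_one_right_eq_Icc]; congr 1; omega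
  rw [this, Finset.sum_Ico_eq_sub _ (by omega : m ≤ 2*m)]

lemma vallee_abs_le (m : ℕ) (hm : 1 ≤ m) (t : ℝ) :
    |vallee m t| ≤ (1/(m:ℝ)) * (∑ k ∈ Finset.range (2*m), dirichletK k t
      + ∑ k ∈ Finset.range m, dirichletK k t) := by
  have h1 := sum_dirichlet_nonneg (2*m) t
  have h2 := sum_dirichlet_nonneg m t
  have hm' : (0:ℝ) < m := by exact_mod_cast hm
  rw [vallee_decomp m hm t, abs_mul]
  rw [abs_of_pos (by positivity : (0:ℝ) < 1/(m:ℝ))]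
  apply mul_le_mul_of_nonneg_left _ (by positivity)
  rw [abs_sub_le_iff]
  constructor <;> linarith

lemma int_vallee_abs_bound (m : ℕ) (hm : 1 ≤ m) :
    ∫ t in (-π)..π, (1/(m:ℝ)) * (∑ k ∈ Finset.range (2*m), dirichletK k t
      + ∑ k ∈ Finset.range m, dirichletK k t) = 3 * π := by
  have hm' : (0:ℝ) < m := by exact_mod_cast hm
  rw [intervalIntegral.integral_const_mul,
    intervalIntegral.integral_add
      ((continuous_finset_sum _ (fun k _ => cont_dirichlet k)).intervalIntegrable _ _)
      ((continuous_finset_sum _ (fun k _ => cont_dirichlet k)).intervalIntegrable _ _),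
    intervalIntegral.integral_finset_sum (fun k _ => (cont_dirichlet k).intervalIntegrable _ _),
    intervalIntegral.integral_finset_sum (fun k _ => (cont_dirichlet k).intervalIntegrable _ _)]
  rw [Finset.sum_congr rfl (fun k _ => int_dirichlet k),
    Finset.sum_congr rfl (fun k _ => int_dirichlet k)]
  simp
  field_simp
  ring

noncomputable def wfun (m : ℕ) (ν : ℕ) : ℝ :=
  if ν = 0 then 1 else (((Finset.Icc m (2*m-1)).filter (fun k => ν ≤ k)).card : ℝ) / m

lemma swap_sum (m N : ℕ) (hN : 2*m-1 ≤ N) (f : ℕ → ℝ) :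
    ∑ k ∈ Finset.Icc m (2*m-1), ∑ ν ∈ Finset.Icc 1 k, f ν
    = ∑ ν ∈ Finset.Icc 1 N,
        ((((Finset.Icc m (2*m-1)).filter (fun k => ν ≤ k)).card : ℝ)) * f ν := by
  have h1 : ∀ k ∈ Finset.Icc m (2*m-1), (∑ ν ∈ Finset.Icc 1 k, f ν)
      = ∑ ν ∈ Finset.Icc 1 N, if ν ≤ k then f ν else 0 := by
    intro k hk
    rw [← Finset.sum_filter]
    congr 1
    ext x
    simp only [Finset.mem_filter, Finset.mem_Icc]
    have := (Finset.mem_Icc.mp hk).2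
    omega
  rw [Finset.sum_congr rfl h1, Finset.sum_comm]
  apply Finset.sum_congr rfl
  intro ν _
  rw [← Finset.sum_filter, Finset.sum_const, nsmul_eq_mul]

lemma vallee_repr (m N : ℕ) (hm : 1 ≤ m) (hN : 2*m-1 ≤ N) (t : ℝ) :
    vallee m t = tpoly (wfun m) (fun _ => 0) N t := by
  unfold vallee dirichletK tpoly
  rw [Finset.sum_add_distrib, Finset.sum_const, Nat.card_Icc,
    swap_sum m N hN (fun ν => Real.cos ((ν:ℝ)*t))]
  have hm' : (0:ℝ) < m := by exact_mod_cast hm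
  have hc : (2*m-1+1-m) = m := by omega
  rw [hc, mul_add]
  congr 1
  · rw [nsmul_eq_mul]; field_simp [wfun]; simp [wfun]
  · rw [Finset.mul_sum]
    apply Finset.sum_congr rfl
    intro ν hν
    have hν1 : ν ≠ 0 := by have := (Finset.mem_Icc.mp hν).1; omega
    simp only [wfun, if_neg hν1]
    field_simp
    simp

lemma wfun_nonneg (m ν : ℕ) : 0 ≤ wfun m ν := by
  unfold wfun; split
  · norm_num
  · positivity

lemma wfun_le_one (m ν : ℕ) (hm : 1 ≤ m) : wfun m ν ≤ 1 := by
  unfold wfun; split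
  · norm_num
  · have hm' : (0:ℝ) < m := by exact_mod_cast hm
    rw [div_le_one hm']
    have h1 : ((Finset.Icc m (2*m-1)).filter (fun k => ν ≤ k)).card ≤ (Finset.Icc m (2*m-1)).card :=
      Finset.card_filter_le _ _
    have h2 : (Finset.Icc m (2*m-1)).card = m := by rw [Nat.card_Icc]; omega
    exact_mod_cast h1.trans_eq h2

lemma wfun_eq_one (m ν : ℕ) (hm : 1 ≤ m) (hν : ν ≤ m) : wfun m ν = 1 := by
  unfold wfun; split
  · rfl
  · have hm' : (0:ℝ) < m := by exact_mod_cast hm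
    have hfull : (Finset.Icc m (2*m-1)).filter (fun k => ν ≤ k) = Finset.Icc m (2*m-1) := by
      apply Finset.filter_true_of_mem
      intro k hk
      have := (Finset.mem_Icc.mp hk).1
      omega
    rw [hfull, Nat.card_Icc]
    have : (2*m-1+1-m) = m := by omega
    rw [this]
    field_simp

lemma wfun_eq_zero (m ν : ℕ) (hm : 1 ≤ m) (hν : 2*m ≤ ν) : wfun m ν = 0 := by
  unfold wfun
  rw [if_neg (by omega)]
  have hempty : (Finset.Icc m (2*m-1)).filter (fun k => ν ≤ k) = ∅ := by
    apply Finset.filter_false_of_mem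
    intro k hk
    have := (Finset.mem_Icc.mp hk).2
    omega
  rw [hempty]
  simp

lemma wfun_half (n ν : ℕ) (hn : 1 ≤ n) (hν : ν ≤ 3*n) : 1/2 ≤ wfun (2*n) ν := by
  unfold wfun; split
  · norm_num
  · have hn' : (0:ℝ) < n := by exact_mod_cast hn
    have hsub : Finset.Icc (3*n) (2*(2*n)-1) ⊆ (Finset.Icc (2*n) (2*(2*n)-1)).filter (fun k => ν ≤ k) := by
      intro x hx
      have := Finset.mem_Icc.mp hx
      simp only [Finset.mem_filter, Finset.mem_Icc]
      omega
    have hcard : n ≤ ((Finset.Icc (2*n) (2*(2*n)-1)).filter (fun k => ν ≤ k)).card := by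
      have := Finset.card_le_card hsub
      rw [Nat.card_Icc] at this
      omega
    have hcard' : (n:ℝ) ≤ (((Finset.Icc (2*n) (2*(2*n)-1)).filter (fun k => ν ≤ k)).card : ℝ) := by
      exact_mod_cast hcard
    rw [le_div_iff₀ (by positivity : (0:ℝ) < ((2*n : ℕ):ℝ))]
    push_cast
    linarith

/-- There is an absolute constant `c > 0` such that for every `n ≥ 1` and
every trigonometric polynomial `T` of degree at most `n−1`:
`max_{t ∈ [−π,π]} |(V_{2n}(t) − V_n(t)) − T(t)| ≥ c·n`. -/
theorem vallee_diff_far_from_trigpoly :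
    ∃ c : ℝ, 0 < c ∧ ∀ n : ℕ, 1 ≤ n → ∀ T : ℝ → ℝ, IsTrigPoly (n - 1) T →
      c * (n : ℝ) ≤
        sSup ((fun t => |vallee (2 * n) t - vallee n t - T t|) '' Set.Icc (-π) π) := by
  refine ⟨1/8, by norm_num, ?_⟩
  intro n hn T hT
  obtain ⟨a, b, hab⟩ := hT
  set N := 4*n - 1 with hNdef
  set a' : ℕ → ℝ := fun k => if k = 0 then a 0 else if k ≤ n-1 then a k else 0 with ha'
  set b' : ℕ → ℝ := fun k => if k ≤ n-1 then b k else 0 with hb'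
  set P : ℕ → ℝ := fun k => wfun (2*n) k - wfun n k - a' k with hP
  set Q : ℕ → ℝ := fun k => -(b' k) with hQ
  -- T as extended tpoly
  have hsub0 : Finset.Icc 1 (n-1) ⊆ Finset.Icc 1 N := by
    intro k hk
    have := Finset.mem_Icc.mp hk
    rw [Finset.mem_Icc]
    omega
  have hTrep : ∀ x, T x = tpoly a' b' N x := by
    intro x
    rw [hab x]
    unfold tpoly
    have h0 : a' 0 = a 0 := by simp [ha']
    rw [h0]
    congr 1
    have hz : ∀ k ∈ Finset.Icc 1 N, k ∉ Finset.Icc 1 (n-1) →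
        a' k * Real.cos ((k:ℝ)*x) + b' k * Real.sin ((k:ℝ)*x) = 0 := by
      intro k hk hk'
      have hk1 := Finset.mem_Icc.mp hk
      have hk2 : ¬ (k ≤ n-1) := fun h => hk' (Finset.mem_Icc.mpr ⟨hk1.1, h⟩)
      have h1 : a' k = 0 := by simp only [ha']; rw [if_neg (by omega), if_neg hk2]
      have h2 : b' k = 0 := by simp only [hb']; rw [if_neg hk2]
      rw [h1, h2]
      ring
    rw [← Finset.sum_subset hsub0 hz]
    apply Finset.sum_congr rfl
    intro k hk
    have hk' := Finset.mem_Icc.mp hk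
    have h1 : a' k = a k := by simp only [ha']; rw [if_neg (by omega), if_pos hk'.2]
    have h2 : b' k = b k := by simp only [hb']; rw [if_pos hk'.2]
    rw [h1, h2]
  -- the difference as a tpoly
  have hrep : ∀ t, vallee (2*n) t - vallee n t - T t = tpoly P Q N t := by
    intro t
    rw [vallee_repr (2*n) N (by omega) (by omega) t, vallee_repr n N hn (by omega) t, hTrep t]
    simp only [tpoly, hP, hQ]
    rw [Finset.sum_congr rfl (fun k (_ : k ∈ Finset.Icc 1 N) =>
      (by ring : (wfun (2*n) k - wfun n k - a' k) * Real.cos ((k:ℝ)*t)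
          + (-(b' k)) * Real.sin ((k:ℝ)*t)
        = ((wfun (2*n) k * Real.cos ((k:ℝ)*t) + (0:ℝ) * Real.sin ((k:ℝ)*t))
            - (wfun n k * Real.cos ((k:ℝ)*t) + (0:ℝ) * Real.sin ((k:ℝ)*t)))
          - (a' k * Real.cos ((k:ℝ)*t) + b' k * Real.sin ((k:ℝ)*t)))),
      Finset.sum_sub_distrib, Finset.sum_sub_distrib]
    have hw2 : wfun (2*n) 0 = 1 := wfun_eq_one (2*n) 0 (by omega) (by omega)
    have hw1 : wfun n 0 = 1 := wfun_eq_one n 0 hn (by omega)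
    rw [hw2, hw1]
    ring
  have himg : (fun t => |vallee (2*n) t - vallee n t - T t|)
      = fun t => |tpoly P Q N t| := funext fun t => by rw [hrep t]
  rw [himg]
  set S := sSup ((fun t => |tpoly P Q N t|) '' Set.Icc (-π) π) with hSdef
  have hcont : Continuous (tpoly P Q N) := cont_tpoly P Q N
  have hbdd : BddAbove ((fun t => |tpoly P Q N t|) '' Set.Icc (-π) π) :=
    (isCompact_Icc.image hcont.abs).bddAbove
  have hSle : ∀ t ∈ Set.Icc (-π) π, |tpoly P Q N t| ≤ S :=
    fun t ht => le_csSup hbdd (Set.mem_image_of_mem _ ht)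
  have hpi := Real.pi_pos
  have h0mem : (0:ℝ) ∈ Set.Icc (-π) π := ⟨by linarith, by linarith⟩
  have hS0 : 0 ≤ S := le_trans (abs_nonneg _) (hSle 0 h0mem)
  -- integral of h * V_n
  have hV1rep : ∀ t, vallee n t = tpoly (wfun n) (fun _ => 0) N t :=
    fun t => vallee_repr n N hn (by omega) t
  have hIntHV : ∫ t in (-π)..π, tpoly P Q N t * vallee n t
      = π * (P 0 * wfun n 0 / 2 + ∑ k ∈ Finset.Icc 1 N, (P k * wfun n k + Q k * 0)) := by
    simp_rw [hV1rep]
    exact tpoly_orth N P Q (wfun n) (fun _ => 0)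
  have h0val : tpoly P Q N 0 = P 0 / 2 + ∑ k ∈ Finset.Icc 1 N, P k := by
    unfold tpoly
    simp
  -- lower bound on B
  have hterm0 : ∀ k ∈ Finset.Icc 1 N, 0 ≤ P k * (1 - wfun n k) := by
    intro k hk
    have hk' := Finset.mem_Icc.mp hk
    rcases le_or_gt k n with hkn | hkn
    · rw [wfun_eq_one n k hn hkn]
      simp
    · have ha0 : a' k = 0 := by simp only [ha']; rw [if_neg (by omega), if_neg (by omega)]
      have hPk : P k = wfun (2*n) k - wfun n k := by simp only [hP]; rw [ha0]; ring
      have h1 : wfun n k ≤ wfun (2*n) k := by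
        rcases le_or_gt (2*n) k with h2n | h2n
        · rw [wfun_eq_zero n k hn h2n]; exact wfun_nonneg _ _
        · rw [wfun_eq_one (2*n) k (by omega) (by omega)]
          exact wfun_le_one n k hn
      have h2 : wfun n k ≤ 1 := wfun_le_one n k hn
      rw [hPk]
      have := wfun_nonneg n k
      nlinarith
  have hBlow : (n:ℝ)/2 ≤ ∑ k ∈ Finset.Icc 1 N, P k * (1 - wfun n k) := by
    have hsub : Finset.Icc (2*n) (3*n) ⊆ Finset.Icc 1 N := by
      intro x hx
      have := Finset.mem_Icc.mp hx
      rw [Finset.mem_Icc]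
      omega
    have hmono : ∑ k ∈ Finset.Icc (2*n) (3*n), P k * (1 - wfun n k)
        ≤ ∑ k ∈ Finset.Icc 1 N, P k * (1 - wfun n k) :=
      Finset.sum_le_sum_of_subset_of_nonneg hsub (fun k hk _ => hterm0 k hk)
    have hterm_half : ∀ k ∈ Finset.Icc (2*n) (3*n), (1:ℝ)/2 ≤ P k * (1 - wfun n k) := by
      intro k hk
      have hk' := Finset.mem_Icc.mp hk
      have hw1 : wfun n k = 0 := wfun_eq_zero n k hn (by omega)
      have ha0 : a' k = 0 := by simp only [ha']; rw [if_neg (by omega), if_neg (by omega)]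
      have hPk : P k = wfun (2*n) k := by simp only [hP]; rw [ha0, hw1]; ring
      rw [hPk, hw1]
      have := wfun_half n k hn hk'.2
      linarith
    have hcard : ∑ k ∈ Finset.Icc (2*n) (3*n), (1:ℝ)/2
        ≤ ∑ k ∈ Finset.Icc (2*n) (3*n), P k * (1 - wfun n k) :=
      Finset.sum_le_sum hterm_half
    rw [Finset.sum_const, Nat.card_Icc, nsmul_eq_mul] at hcard
    have hcc : (3*n+1-2*n) = n + 1 := by omega
    rw [hcc] at hcard
    push_cast at hcard
    linarith
  -- B in terms of integral
  have hw1zero : wfun n 0 = 1 := wfun_eq_one n 0 hn (by omega)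
  have hB : tpoly P Q N 0 - (1/π) * (∫ t in (-π)..π, tpoly P Q N t * vallee n t)
      = ∑ k ∈ Finset.Icc 1 N, P k * (1 - wfun n k) := by
    rw [hIntHV, h0val, hw1zero]
    have hπ : π ≠ 0 := Real.pi_ne_zero
    have hX : (1/π) * (π * (P 0 * 1 / 2 + ∑ k ∈ Finset.Icc 1 N, (P k * wfun n k + Q k * 0)))
        = P 0 * 1 / 2 + ∑ k ∈ Finset.Icc 1 N, (P k * wfun n k + Q k * 0) := by
      field_simp
      ring
    have e1 : ∑ k ∈ Finset.Icc 1 N, P k * (1 - wfun n k)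
        = (∑ k ∈ Finset.Icc 1 N, P k) - ∑ k ∈ Finset.Icc 1 N, (P k * wfun n k + Q k * 0) := by
      rw [← Finset.sum_sub_distrib]
      exact Finset.sum_congr rfl (fun k _ => by ring)
    rw [hX, e1]
    ring
  -- upper bound via S
  have hIntAbs : |∫ t in (-π)..π, tpoly P Q N t * vallee n t| ≤ 3 * π * S := by
    have h1 : |∫ t in (-π)..π, tpoly P Q N t * vallee n t|
        ≤ ∫ t in (-π)..π, |tpoly P Q N t * vallee n t| :=
      intervalIntegral.abs_integral_le_integral_abs (by linarith)
    have h2 : ∫ t in (-π)..π, |tpoly P Q N t * vallee n t|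
        ≤ ∫ t in (-π)..π, S * ((1/(n:ℝ)) * (∑ k ∈ Finset.range (2*n), dirichletK k t
          + ∑ k ∈ Finset.range n, dirichletK k t)) := by
      apply intervalIntegral.integral_mono_on (by linarith)
        ((hcont.mul (cont_vallee n)).abs.intervalIntegrable _ _)
        ((continuous_const.mul (continuous_const.mul
          ((continuous_finset_sum _ (fun k _ => cont_dirichlet k)).add
           (continuous_finset_sum _ (fun k _ => cont_dirichlet k))))).intervalIntegrable _ _)
      intro t ht
      rw [Pi.mul_apply, abs_mul]
      exact mul_le_mul (hSle t ht) (vallee_abs_le n hn t) (abs_nonneg _) hS0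
    have h3 : ∫ t in (-π)..π, S * ((1/(n:ℝ)) * (∑ k ∈ Finset.range (2*n), dirichletK k t
        + ∑ k ∈ Finset.range n, dirichletK k t)) = S * (3 * π) := by
      rw [intervalIntegral.integral_const_mul, int_vallee_abs_bound n hn]
    linarith
  have hS1 : tpoly P Q N 0 ≤ S := le_trans (le_abs_self _) (hSle 0 h0mem)
  have hfinal : (n:ℝ)/2 ≤ 4 * S := by
    have := hBlow
    rw [← hB] at this
    have hbound : tpoly P Q N 0 - (1/π) * (∫ t in (-π)..π, tpoly P Q N t * vallee n t)
        ≤ S + (1/π) * (3 * π * S) := by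
      have h4 : -(1/π) * (∫ t in (-π)..π, tpoly P Q N t * vallee n t)
          ≤ (1/π) * |∫ t in (-π)..π, tpoly P Q N t * vallee n t| := by
        rw [neg_mul]
        have := neg_abs_le (∫ t in (-π)..π, tpoly P Q N t * vallee n t)
        have hπinv : (0:ℝ) < 1/π := by positivity
        nlinarith [abs_nonneg (∫ t in (-π)..π, tpoly P Q N t * vallee n t)]
      have h5 : (1/π) * |∫ t in (-π)..π, tpoly P Q N t * vallee n t| ≤ (1/π) * (3 * π * S) :=
        mul_le_mul_of_nonneg_left hIntAbs (by positivity)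
      linarith
    have h6 : (1/π) * (3 * π * S) = 3 * S := by field_simp
    rw [h6] at hbound
    linarith
  rw [hSdef] at hfinal ⊢
  linarith
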